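/- Let d ≥ 1 and n ≥ 1, let q_1, …, q_n, k_1, …, k_n ∈ ℝ^d, let V ∈ ℝ^{n×d} with rows v_1, …, v_n, and set v_max := max_{l∈[n]} ‖v_l‖_∞, R := max_{i∈[n]} max(‖q_i‖₂, ‖k_i‖₂). Define the attention kernel κ_att((a,b),(a',b')) := exp(⟨a,a'⟩)·⟨b,b'⟩ on pairs (a,b) ∈ ℝ^d × ℝ^{d+1}, the input points x̃_l := (k_l/d^{1/4}, (v_l, v_max)) for l ∈ [n], and the query points y_{i,j} := (q_i/d^{1/4}, e_j) for i ∈ [n], j ∈ [d+1], where e_j is the j-th standard basis vector of ℝ^{d+1}. Then: (i) min_{i∈[n]} (1/n)·Σ_{j=1}^n exp(⟨q_i,k_j⟩/√d) ≥ exp(−R²/√d); (ii) for every l ∈ [n], √(κ_att(x̃_l, x̃_l)) ≤ exp(R²/(2√d))·√( max_{l'∈[n]} ‖v_{l'}‖₂² + v_max² ); (iii) for all i ∈ [n], j ∈ [d+1], ‖y_{i,j}‖₂ ≤ √(R²/√d + 1) and √(κ_att(y_{i,j}, y_{i,j})) ≤ exp(R²/(2√d)); and (iv) for all i, k ∈ [n],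 j, m ∈ [d+1], and l ∈ [n], |κ_att(y_{i,j}, x̃_l) − κ_att(y_{k,m}, x̃_l)| ≤ exp(R²/√d)·√(R²/√d + 2)·v_max·‖y_{i,j} − y_{k,m}‖₂. -/

import Mathlib

open Finset
open scoped RealInnerProductSpace

noncomputable section

/-- Euclidean norm of a concatenated pair of Euclidean vectors. -/
def pairNorm {d : ℕ} (p : EuclideanSpace ℝ (Fin d) × EuclideanSpace ℝ (Fin (d+1))) : ℝ :=
  Real.sqrt (‖p.1‖^2 + ‖p.2‖^2)

lemma exp_lip_aux {a a' M : ℝ} (ha : a ≤ M) (h : a' ≤ a) :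
    |Real.exp a - Real.exp a'| ≤ Real.exp M * |a - a'| := by
  rw [abs_of_nonneg (sub_nonneg.2 (Real.exp_le_exp.2 h)), abs_of_nonneg (sub_nonneg.2 h)]
  have h1 := Real.add_one_le_exp (a' - a)
  have h2 := Real.exp_le_exp.2 ha
  have h3 : Real.exp a' = Real.exp a * Real.exp (a' - a) := by
    rw [← Real.exp_add]; ring_nf
  nlinarith [Real.exp_pos a, Real.exp_pos (a' - a)]

lemma exp_lip {a a' M : ℝ} (ha : a ≤ M) (ha' : a' ≤ M) :
    |Real.exp a - Real.exp a'| ≤ Real.exp M * |a - a'| := by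
  rcases le_total a' a with h | h
  · exact exp_lip_aux ha h
  · rw [abs_sub_comm, abs_sub_comm a a']; exact exp_lip_aux ha' h

lemma haa_aux {c R x I : ℝ} (hc0 : 0 ≤ c) (hR0 : 0 ≤ R) (hx0 : 0 ≤ x)
    (hI : |I| ≤ x * R) : |c^2 * I| ≤ (R * c) * (c * x) := by
  rw [abs_mul, abs_of_nonneg (by positivity : (0:ℝ) ≤ c^2)]
  nlinarith [abs_nonneg I, sq_nonneg c]

lemma cs_aux {M u w : ℝ} (hM0 : 0 ≤ M) (hu0 : 0 ≤ u) (hw0 : 0 ≤ w) :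
    Real.sqrt M * u + Real.sqrt 2 * w ≤ Real.sqrt (M + 2) * Real.sqrt (u^2 + w^2) := by
  rw [← Real.sqrt_mul (by linarith : (0:ℝ) ≤ M + 2)]
  apply (Real.le_sqrt (by positivity) (by positivity)).mpr
  nlinarith [sq_nonneg (Real.sqrt M * w - Real.sqrt 2 * u), Real.sq_sqrt hM0,
    Real.sq_sqrt (show (0:ℝ) ≤ 2 by norm_num), Real.sqrt_nonneg M, Real.sqrt_nonneg 2,
    mul_nonneg hu0 hw0]

set_option maxHeartbeats 2000000 in
theorem stmt16 {d n : ℕ} (hd : 1 ≤ d) (hn : 1 ≤ n)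
    (q k v : Fin n → EuclideanSpace ℝ (Fin d))
    (vmax : ℝ) (hvmax : vmax = ⨆ l, ⨆ j, |v l j|)
    (R : ℝ) (hR : R = ⨆ i, max ‖q i‖ ‖k i‖)
    (katt : (EuclideanSpace ℝ (Fin d) × EuclideanSpace ℝ (Fin (d+1))) →
            (EuclideanSpace ℝ (Fin d) × EuclideanSpace ℝ (Fin (d+1))) → ℝ)
    (hkatt : ∀ p p', katt p p' = Real.exp ⟪p.1, p'.1⟫ * ⟪p.2, p'.2⟫)
    (xt : Fin n → EuclideanSpace ℝ (Fin d) × EuclideanSpace ℝ (Fin (d+1)))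
    (hxt : ∀ l, xt l = (((d : ℝ) ^ ((1:ℝ)/4))⁻¹ • k l,
      (WithLp.equiv 2 (Fin (d+1) → ℝ)).symm (Fin.snoc (fun j => v l j) vmax)))
    (y : Fin n → Fin (d+1) → EuclideanSpace ℝ (Fin d) × EuclideanSpace ℝ (Fin (d+1)))
    (hy : ∀ i j, y i j = (((d : ℝ) ^ ((1:ℝ)/4))⁻¹ • q i, EuclideanSpace.single j 1)) :
    (∀ i, Real.exp (-(R^2) / Real.sqrt d) ≤
       (1/(n : ℝ)) * ∑ j, Real.exp (⟪q i, k j⟫ / Real.sqrt d)) ∧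
    (∀ l, Real.sqrt (katt (xt l) (xt l)) ≤
       Real.exp (R^2 / (2 * Real.sqrt d)) * Real.sqrt ((⨆ l', ‖v l'‖^2) + vmax^2)) ∧
    (∀ i j, pairNorm (y i j) ≤ Real.sqrt (R^2 / Real.sqrt d + 1) ∧
       Real.sqrt (katt (y i j) (y i j)) ≤ Real.exp (R^2 / (2 * Real.sqrt d))) ∧
    (∀ i k' j m l, |katt (y i j) (xt l) - katt (y k' m) (xt l)| ≤
       Real.exp (R^2 / Real.sqrt d) * Real.sqrt (R^2 / Real.sqrt d + 2) * vmax *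
         pairNorm (y i j - y k' m)) := by
  have hd0 : (0:ℝ) < (d:ℝ) := by
    have : 0 < d := hd
    exact_mod_cast this
  have hn0 : (0:ℝ) < (n:ℝ) := by
    have : 0 < n := hn
    exact_mod_cast this
  have hsd : 0 < Real.sqrt d := Real.sqrt_pos.2 hd0
  set c : ℝ := ((d : ℝ) ^ ((1:ℝ)/4))⁻¹ with hc
  have hc0 : 0 ≤ c := by positivity
  have hc2 : c ^ 2 = (Real.sqrt d)⁻¹ := by
    rw [hc, inv_pow, ← Real.rpow_natCast ((d:ℝ) ^ ((1:ℝ)/4)) 2,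
      ← Real.rpow_mul hd0.le, Real.sqrt_eq_rpow]
    norm_num
  -- R bounds
  have hqR : ∀ i, ‖q i‖ ≤ R := by
    intro i
    rw [hR]
    exact (le_max_left _ _).trans
      (le_ciSup (f := fun i => max ‖q i‖ ‖k i‖) (Set.Finite.bddAbove (Set.finite_range _)) i)
  have hkR : ∀ i, ‖k i‖ ≤ R := by
    intro i
    rw [hR]
    exact (le_max_right _ _).trans
      (le_ciSup (f := fun i => max ‖q i‖ ‖k i‖) (Set.Finite.bddAbove (Set.finite_range _)) i)
  have hR0 : 0 ≤ R := (norm_nonneg (q ⟨0, hn⟩)).trans (hqR _)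
  -- vmax bounds
  have hvm : ∀ l (j : Fin d), |v l j| ≤ vmax := by
    intro l j
    rw [hvmax]
    exact le_trans (le_ciSup (f := fun j => |v l j|) (Set.Finite.bddAbove (Set.finite_range _)) j)
      (le_ciSup (f := fun l => ⨆ j, |v l j|) (Set.Finite.bddAbove (Set.finite_range _)) l)
  have hvm0 : 0 ≤ vmax := (abs_nonneg _).trans (hvm ⟨0, hn⟩ ⟨0, hd⟩)
  -- inner products of scaled vectors
  have hinner1 : ∀ (x z : EuclideanSpace ℝ (Fin d)),
      ⟪c • x, c • z⟫ = (Real.sqrt d)⁻¹ * ⟪x, z⟫ := by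
    intro x z
    rw [real_inner_smul_left, real_inner_smul_right, ← mul_assoc, ← sq, hc2]
  have hinerRR : ∀ (x z : EuclideanSpace ℝ (Fin d)), ‖x‖ ≤ R → ‖z‖ ≤ R → ⟪x, z⟫ ≤ R ^ 2 := by
    intro x z hx hz
    have h1 := abs_real_inner_le_norm x z
    nlinarith [norm_nonneg x, norm_nonneg z, le_abs_self ⟪x, z⟫]
  set M : ℝ := R ^ 2 / Real.sqrt d with hM
  have hM0 : 0 ≤ M := by positivity
  have hMs : M = R ^ 2 * (Real.sqrt d)⁻¹ := div_eq_mul_inv _ _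
  -- xt entries
  have hxt2 : ∀ l (t : Fin (d+1)), ((xt l).2 : EuclideanSpace ℝ (Fin (d+1))) t
      = Fin.snoc (α := fun _ => ℝ) (fun j => v l j) vmax t := by
    intro l t; rw [hxt]; rfl
  have hwabs : ∀ l (t : Fin (d+1)), |((xt l).2 : EuclideanSpace ℝ (Fin (d+1))) t| ≤ vmax := by
    intro l t
    rw [hxt2]
    refine Fin.lastCases ?_ ?_ t
    · simp [Fin.snoc_last, abs_of_nonneg hvm0]
    · intro t'; simp only [Fin.snoc_castSucc]; exact hvm l t'
  have hysnd : ∀ i (j : Fin (d+1)) (z : EuclideanSpace ℝ (Fin (d+1))),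
      (⟪(y i j).2, z⟫ : ℝ) = z j := by
    intro i j z
    rw [hy, EuclideanSpace.inner_single_left]
    simp
  refine ⟨?_, ?_, ?_, ?_⟩
  · -- part (i)
    intro i
    have hterm : ∀ j : Fin n, Real.exp (-(R^2) / Real.sqrt d)
        ≤ Real.exp (⟪q i, k j⟫ / Real.sqrt d) := by
      intro j
      apply Real.exp_le_exp.2
      apply (div_le_div_iff_of_pos_right hsd).2
      have h1 := abs_real_inner_le_norm (q i) (k j)
      nlinarith [hqR i, hkR j, norm_nonneg (q i), norm_nonneg (k j),
        neg_abs_le (⟪q i, k j⟫ : ℝ)]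
    have hsum : (n:ℝ) * Real.exp (-(R^2) / Real.sqrt d)
        ≤ ∑ j, Real.exp (⟪q i, k j⟫ / Real.sqrt d) := by
      calc (n:ℝ) * Real.exp (-(R^2) / Real.sqrt d)
          = ∑ _j : Fin n, Real.exp (-(R^2) / Real.sqrt d) := by
            simp [Finset.sum_const, nsmul_eq_mul]
        _ ≤ _ := Finset.sum_le_sum fun j _ => hterm j
    have := mul_le_mul_of_nonneg_left hsum (by positivity : (0:ℝ) ≤ 1/(n:ℝ))
    calc Real.exp (-(R^2) / Real.sqrt d)
        = (1/(n:ℝ)) * ((n:ℝ) * Real.exp (-(R^2) / Real.sqrt d)) := by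
          field_simp
      _ ≤ _ := this
  · -- part (ii)
    intro l
    have hsnd : (⟪(xt l).2, (xt l).2⟫ : ℝ) = ‖v l‖^2 + vmax^2 := by
      rw [PiLp.inner_apply]
      simp only [RCLike.inner_apply, conj_trivial]
      rw [Fin.sum_univ_castSucc]
      simp only [hxt2, Fin.snoc_castSucc, Fin.snoc_last]
      congr 1
      · rw [← real_inner_self_eq_norm_sq, PiLp.inner_apply]
        simp [sq]
      · rw [sq]
    have hk2 : katt (xt l) (xt l)
        = Real.exp ((Real.sqrt d)⁻¹ * ‖k l‖^2) * (‖v l‖^2 + vmax^2) := by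
      rw [hkatt, hsnd]
      congr 2
      rw [hxt]
      simp only
      rw [hinner1, real_inner_self_eq_norm_sq]
    rw [hk2, Real.sqrt_mul (Real.exp_nonneg _), ← Real.exp_half]
    have hvsup : ‖v l‖^2 ≤ ⨆ l', ‖v l'‖^2 :=
      le_ciSup (f := fun l' => ‖v l'‖^2) (Set.Finite.bddAbove (Set.finite_range _)) l
    apply mul_le_mul
    · apply Real.exp_le_exp.2
      have h1 : ‖k l‖^2 ≤ R^2 := by nlinarith [hkR l, norm_nonneg (k l)]
      rw [div_eq_mul_inv (R^2), mul_inv]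
      nlinarith [hsd, inv_nonneg.2 hsd.le]
    · exact Real.sqrt_le_sqrt (by linarith)
    · exact Real.sqrt_nonneg _
    · exact Real.exp_nonneg _
  · -- part (iii)
    intro i j
    have hy1 : (y i j).1 = c • q i := by rw [hy]
    have hy2 : (y i j).2 = EuclideanSpace.single j (1:ℝ) := by rw [hy]
    constructor
    · show Real.sqrt (‖(y i j).1‖^2 + ‖(y i j).2‖^2) ≤ _
      rw [hy1, hy2, EuclideanSpace.norm_single, norm_smul, Real.norm_eq_abs,
        abs_of_nonneg hc0, norm_one]
      apply Real.sqrt_le_sqrt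
      have h1 : ‖q i‖^2 ≤ R^2 := by nlinarith [hqR i, norm_nonneg (q i)]
      have h2 : (c * ‖q i‖)^2 = c^2 * ‖q i‖^2 := by ring
      rw [h2, hc2, hMs]
      nlinarith [inv_nonneg.2 hsd.le]
    · have hk2 : katt (y i j) (y i j) = Real.exp ((Real.sqrt d)⁻¹ * ‖q i‖^2) := by
        rw [hkatt]
        have h2 : (⟪(y i j).2, (y i j).2⟫ : ℝ) = 1 := by
          rw [hysnd, hy]
          simp [EuclideanSpace.single_apply]
        rw [h2, mul_one]
        congr 1
        rw [hy]
        simp only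
        rw [hinner1, real_inner_self_eq_norm_sq]
      rw [hk2, ← Real.exp_half]
      apply Real.exp_le_exp.2
      have h1 : ‖q i‖^2 ≤ R^2 := by nlinarith [hqR i, norm_nonneg (q i)]
      rw [div_eq_mul_inv (R^2), mul_inv]
      nlinarith [hsd, inv_nonneg.2 hsd.le, sq_nonneg (Real.sqrt d)]
  · -- part (iv)
    intro i k' j m l
    set s : ℝ := (Real.sqrt d)⁻¹ with hs
    have hs0 : 0 ≤ s := inv_nonneg.2 hsd.le
    set a : ℝ := s * ⟪q i, k l⟫ with ha
    set a' : ℝ := s * ⟪q k', k l⟫ with ha'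
    set b : ℝ := ((xt l).2 : EuclideanSpace ℝ (Fin (d+1))) j with hb
    set b' : ℝ := ((xt l).2 : EuclideanSpace ℝ (Fin (d+1))) m with hb'
    have h1 : katt (y i j) (xt l) = Real.exp a * b := by
      rw [hkatt, hysnd]
      congr 2
      rw [hy, hxt]
      simp only
      rw [hinner1]
    have h2 : katt (y k' m) (xt l) = Real.exp a' * b' := by
      rw [hkatt, hysnd]
      congr 2
      rw [hy, hxt]
      simp only
      rw [hinner1]
    have haM : a ≤ M := by
      rw [ha, hMs, hs]
      nlinarith [hinerRR (q i) (k l) (hqR i) (hkR l), inv_nonneg.2 hsd.le]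
    have ha'M : a' ≤ M := by
      rw [ha', hMs, hs]
      nlinarith [hinerRR (q k') (k l) (hqR k') (hkR l), inv_nonneg.2 hsd.le]
    have hbv : |b| ≤ vmax := hwabs l j
    have hb'v : |b'| ≤ vmax := hwabs l m
    -- components of the difference
    have hfst : (y i j - y k' m).1 = c • (q i - q k') := by
      rw [Prod.fst_sub, hy, hy]
      simp only
      rw [smul_sub]
    have hsnd2 : (y i j - y k' m).2 = EuclideanSpace.single j (1:ℝ) - EuclideanSpace.single m 1 := by
      rw [Prod.snd_sub, hy, hy]
    set u : ℝ := ‖(y i j - y k' m).1‖ with hu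
    set w : ℝ := ‖(y i j - y k' m).2‖ with hw
    have hu0 : 0 ≤ u := norm_nonneg _
    have hw0 : 0 ≤ w := norm_nonneg _
    -- |a - a'| bound
    have hua : u = c * ‖q i - q k'‖ := by
      rw [hu, hfst, norm_smul, Real.norm_eq_abs, abs_of_nonneg hc0]
    have hsqrtM : Real.sqrt M = R * c := by
      rw [hMs, ← hc2, Real.sqrt_mul (sq_nonneg R), Real.sqrt_sq hR0, Real.sqrt_sq hc0]
    have haa : |a - a'| ≤ Real.sqrt M * u := by
      have hd1 : a - a' = c^2 * ⟪q i - q k', k l⟫ := by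
        rw [ha, ha', hc2, inner_sub_left]; ring
      have hIR : |(⟪q i - q k', k l⟫ : ℝ)| ≤ ‖q i - q k'‖ * R :=
        (abs_real_inner_le_norm _ _).trans
          (mul_le_mul_of_nonneg_left (hkR l) (norm_nonneg _))
      rw [hd1, hsqrtM, hua]
      exact haa_aux hc0 hR0 (norm_nonneg _) hIR
    -- |b - b'| bound
    have hbb : |b - b'| ≤ Real.sqrt 2 * vmax * w := by
      rcases eq_or_ne j m with rfl | hjm
      · have : b = b' := rfl
        rw [this, sub_self, abs_zero]
        positivity
      · have hw2 : w = Real.sqrt 2 := by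
          have hinner : (⟪(y i j - y k' m).2, (y i j - y k' m).2⟫ : ℝ) = 2 := by
            rw [hsnd2]
            rw [inner_sub_left, inner_sub_right, inner_sub_right]
            rw [EuclideanSpace.inner_single_left, EuclideanSpace.inner_single_left,
              EuclideanSpace.inner_single_left, EuclideanSpace.inner_single_left]
            simp [EuclideanSpace.single_apply, hjm, hjm.symm]
            norm_num
          have : w^2 = 2 := by rw [hw, ← real_inner_self_eq_norm_sq, hinner]
          rw [← this, Real.sqrt_sq hw0]
        rw [hw2]
        have h22 : Real.sqrt 2 * Real.sqrt 2 = 2 := Real.mul_self_sqrt (by norm_num)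
        have habs : |b - b'| ≤ 2 * vmax := by
          calc |b - b'| ≤ |b| + |b'| := abs_sub _ _
            _ ≤ 2 * vmax := by linarith
        have heq : Real.sqrt 2 * vmax * Real.sqrt 2 = 2 * vmax := by
          rw [show Real.sqrt 2 * vmax * Real.sqrt 2
              = (Real.sqrt 2 * Real.sqrt 2) * vmax by ring, h22]
        rw [heq]
        exact habs
    -- combine
    have hE : ∀ t : ℝ, t ≤ M → Real.exp t ≤ Real.exp M := fun t ht => Real.exp_le_exp.2 ht
    have hdiff : Real.exp a * b - Real.exp a' * b'
        = Real.exp a * (b - b') + (Real.exp a - Real.exp a') * b' := by ring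
    have hstep : |katt (y i j) (xt l) - katt (y k' m) (xt l)|
        ≤ Real.exp M * (Real.sqrt 2 * vmax * w) + (Real.exp M * (Real.sqrt M * u)) * vmax := by
      rw [h1, h2, hdiff]
      calc |Real.exp a * (b - b') + (Real.exp a - Real.exp a') * b'|
          ≤ |Real.exp a * (b - b')| + |(Real.exp a - Real.exp a') * b'| := abs_add_le _ _
        _ = Real.exp a * |b - b'| + |Real.exp a - Real.exp a'| * |b'| := by
            rw [abs_mul, abs_mul, abs_of_nonneg (Real.exp_nonneg a)]
        _ ≤ Real.exp M * (Real.sqrt 2 * vmax * w) + (Real.exp M * (Real.sqrt M * u)) * vmax := by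
            apply add_le_add
            · apply mul_le_mul (hE a haM) hbb (abs_nonneg _) (Real.exp_nonneg _)
            · calc |Real.exp a - Real.exp a'| * |b'|
                  ≤ (Real.exp M * |a - a'|) * vmax := by
                    apply mul_le_mul (exp_lip haM ha'M) hb'v (abs_nonneg _)
                    positivity
                _ ≤ (Real.exp M * (Real.sqrt M * u)) * vmax := by
                    apply mul_le_mul_of_nonneg_right _ hvm0
                    exact mul_le_mul_of_nonneg_left haa (Real.exp_nonneg _)
    have hcs : Real.sqrt M * u + Real.sqrt 2 * w ≤ Real.sqrt (M + 2) * Real.sqrt (u^2 + w^2) :=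
      cs_aux hM0 hu0 hw0
    have hpn : pairNorm (y i j - y k' m) = Real.sqrt (u^2 + w^2) := rfl
    rw [hpn]
    calc |katt (y i j) (xt l) - katt (y k' m) (xt l)|
        ≤ Real.exp M * (Real.sqrt 2 * vmax * w) + (Real.exp M * (Real.sqrt M * u)) * vmax := hstep
      _ = Real.exp M * vmax * (Real.sqrt M * u + Real.sqrt 2 * w) := by ring
      _ ≤ Real.exp M * vmax * (Real.sqrt (M + 2) * Real.sqrt (u^2 + w^2)) := by
          apply mul_le_mul_of_nonneg_left hcs
          positivity
      _ = Real.exp M * Real.sqrt (M + 2) * vmax * Real.sqrt (u^2 + w^2) := by ring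

end
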